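/- arXiv:1409.4589 — 3 statements merged into one kernel-verified Lean document; each statement's English description precedes it below -/
import Mathlib

section
/- For every integer d ≥ 2, ICor(𝔤_d*) = 𝔷_d^⊥; that is, the common zero set of all Ad*(G_d)-invariant polynomial functions P on 𝔤_d* with P(0) = 0 is exactly {ℓ ∈ 𝔤_d* : ℓ(Z_1) = ⋯ = ℓ(Z_d) = 0}. -/
/-- The coadjoint action of the Lie algebra: `(coad X f) W = f ⁅W, X⁆`. -/
def coad {L : Type*} [LieRing L] [LieAlgebra ℝ L] (X : L) (f : Module.Dual ℝ L) :
    Module.Dual ℝ L where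
  toFun W := f ⁅W, X⁆
  map_add' a b := by simp [add_lie]
  map_smul' c a := by simp [smul_lie]

/-- The set `{ad*_X ℓ : X ∈ 𝔤, ℓ ∈ 𝔤*}` of all coadjoint tangent vectors. -/
def adStar (L : Type*) [LieRing L] [LieAlgebra ℝ L] : Set (Module.Dual ℝ L) :=
  {g | ∃ (X : L) (ℓ : Module.Dual ℝ L), g = coad X ℓ}

/-- Coordinates of a linear functional with respect to the dual basis of `B`;
this identifies `𝔤*` with `ι → ℝ`, carrying the canonical topology. -/
noncomputable def coords {ι : Type*} {L : Type*} [LieRing L] [LieAlgebra ℝ L]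
    (B : Module.Basis ι ℝ L) (f : Module.Dual ℝ L) : ι → ℝ := fun a => f (B a)

/-- The cortex `Cor(𝔤*)`: the closure (in the canonical topology of the
finite-dimensional space `𝔤*`, transported to coordinates via the dual basis)
of the set `{ad*_X ℓ : X ∈ 𝔤, ℓ ∈ 𝔤*}`. -/
def corSet {ι : Type*} {L : Type*} [LieRing L] [LieAlgebra ℝ L] (B : Module.Basis ι ℝ L) :
    Set (Module.Dual ℝ L) :=
  {f | coords B f ∈ closure (coords B '' adStar L)}

/-- Index type for the basis of `𝔤_d`: first component indexes `Z_1,…,Z_d`, the second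
the odd `Y`'s `Y_1, Y_3, …, Y_{2d-1}`, the third the even `Y`'s `Y_2, Y_4, …, Y_{2d}`,
and the fourth `X_1,…,X_d`. -/
abbrev Idx (d : ℕ) : Type := Fin d ⊕ (Fin d ⊕ (Fin d ⊕ Fin d))

/-- Index of `Z_{i+1}`. -/
def zI {d : ℕ} (i : Fin d) : Idx d := Sum.inl i
/-- Index of `Y_{2i+1}` (odd-indexed `Y`). -/
def yoI {d : ℕ} (i : Fin d) : Idx d := Sum.inr (Sum.inl i)
/-- Index of `Y_{2i+2}` (even-indexed `Y`). -/
def yeI {d : ℕ} (i : Fin d) : Idx d := Sum.inr (Sum.inr (Sum.inl i))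
/-- Index of `X_{i+1}`. -/
def xI {d : ℕ} (i : Fin d) : Idx d := Sum.inr (Sum.inr (Sum.inr i))

/-- Value of `⁅X_{i+1}, Y_{2i+2}⁆`: `Z_{i+2}` if `i + 1 < d`, and `Z_2 + ⋯ + Z_d`
if `i + 1 = d`. -/
def gdW {d : ℕ} (hd : 2 ≤ d) {V : Type*} [AddCommGroup V] (B : Idx d → V) (i : Fin d) : V :=
  if h : (i : ℕ) < d - 1 then B (zI ⟨(i : ℕ) + 1, by omega⟩)
  else ∑ m ∈ Finset.univ.filter (fun m : Fin d => 0 < (m : ℕ)), B (zI m)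

/-- The bracket `⁅B a, B b⁆` of two basis vectors of `𝔤_d`, given by the structure
constants: `⁅X_i, Y_{2i-1}⁆ = Z_1` for `i = 1,…,d`, `⁅X_k, Y_{2k}⁆ = Z_{k+1}` for
`k = 1,…,d-1`, `⁅X_d, Y_{2d}⁆ = Z_2 + ⋯ + Z_d`, all other brackets of basis
vectors being zero (up to antisymmetry). -/
def gdBr {d : ℕ} (hd : 2 ≤ d) {V : Type*} [AddCommGroup V] (B : Idx d → V) :
    Idx d → Idx d → V
  | Sum.inr (Sum.inr (Sum.inr i)), Sum.inr (Sum.inl j) =>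
      if i = j then B (zI ⟨0, by omega⟩) else 0
  | Sum.inr (Sum.inl j), Sum.inr (Sum.inr (Sum.inr i)) =>
      if i = j then -(B (zI ⟨0, by omega⟩)) else 0
  | Sum.inr (Sum.inr (Sum.inr i)), Sum.inr (Sum.inr (Sum.inl j)) =>
      if i = j then gdW hd B i else 0
  | Sum.inr (Sum.inr (Sum.inl j)), Sum.inr (Sum.inr (Sum.inr i)) =>
      if i = j then -(gdW hd B i) else 0
  | _, _ => 0

/-- The homogeneous polynomial `Q_d` of degree `d`, evaluated at the odd coordinates
`ηo` (`ηo i = η_{2i+1}`) and the even coordinates `ηe` (`ηe i = η_{2i+2}`):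
`Q_d = η_{2d-1}·Σ_{i=1}^{d-1}(η_{2i}·∏_{j=1, j≠i}^{d-1} η_{2j-1})
      − η_{2d}·∏_{j=1}^{d-1} η_{2j-1}`. -/
def Qd (d : ℕ) (hd : 2 ≤ d) (ηo ηe : Fin d → ℝ) : ℝ :=
  ηo ⟨d - 1, by omega⟩ *
      (∑ i ∈ Finset.univ.filter (fun i : Fin d => (i : ℕ) < d - 1),
        ηe i * ∏ j ∈ Finset.univ.filter (fun j : Fin d => (j : ℕ) < d - 1 ∧ j ≠ i), ηo j)
    - ηe ⟨d - 1, by omega⟩ *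
        ∏ j ∈ Finset.univ.filter (fun j : Fin d => (j : ℕ) < d - 1), ηo j

section Aux

variable {d : ℕ}

/-- Pack four `Fin d`-blocks into a function on `Idx d`. -/
def pack (z a b g : Fin d → ℝ) : Idx d → ℝ := Sum.elim z (Sum.elim a (Sum.elim b g))

/-- The index `0` of `Z_1`. -/
def i0 (hd : 2 ≤ d) : Fin d := ⟨0, by omega⟩

/-- The index `d-1` of `Z_d`. -/
def ilast (hd : 2 ≤ d) : Fin d := ⟨d - 1, by omega⟩

/-- The scalar value of `gdW` under a functional with `Z`-coordinates `z`. -/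
def wv (z : Fin d → ℝ) (j : Fin d) : ℝ :=
  if h : (j : ℕ) < d - 1 then z ⟨(j : ℕ) + 1, by omega⟩
  else ∑ m ∈ Finset.univ.filter (fun m : Fin d => 0 < (m : ℕ)), z m

lemma pack_affine (zb zd a b g : Fin d → ℝ) (t : ℝ) :
    pack (zb + t • zd) a b g = pack zb a b g + t • pack zd 0 0 0 := by
  funext x
  rcases x with i | i | i | i <;> simp [pack]

lemma cont_curve (p : (Idx d → ℝ) → ℝ) (hp : Continuous p) (zb zd a b g : Fin d → ℝ) :
    Continuous fun t : ℝ => p (pack (zb + t • zd) a b g) := by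
  have h : ∀ t : ℝ, pack (zb + t • zd) a b g = pack zb a b g + t • pack zd 0 0 0 :=
    pack_affine zb zd a b g
  simp only [h]
  exact hp.comp (continuous_const.add (continuous_id.smul continuous_const))

section BrLemmas

variable {V : Type*} [AddCommGroup V] (hd : 2 ≤ d) (Bf : Idx d → V) (i j : Fin d)

lemma gdBr_zl (e : Idx d) : gdBr hd Bf (Sum.inl i) e = 0 := by
  rcases e with k | k | k | k <;> rfl

lemma gdBr_yo_zl : gdBr hd Bf (Sum.inr (Sum.inl j)) (Sum.inl i) = 0 := rfl
lemma gdBr_yo_yo : gdBr hd Bf (Sum.inr (Sum.inl j)) (Sum.inr (Sum.inl i)) = 0 := rfl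
lemma gdBr_yo_ye : gdBr hd Bf (Sum.inr (Sum.inl j)) (Sum.inr (Sum.inr (Sum.inl i))) = 0 := rfl
lemma gdBr_yo_x : gdBr hd Bf (Sum.inr (Sum.inl j)) (Sum.inr (Sum.inr (Sum.inr i))) =
    if i = j then -(Bf (zI (i0 hd))) else 0 := rfl
lemma gdBr_ye_zl : gdBr hd Bf (Sum.inr (Sum.inr (Sum.inl j))) (Sum.inl i) = 0 := rfl
lemma gdBr_ye_yo : gdBr hd Bf (Sum.inr (Sum.inr (Sum.inl j))) (Sum.inr (Sum.inl i)) = 0 := rfl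
lemma gdBr_ye_ye : gdBr hd Bf (Sum.inr (Sum.inr (Sum.inl j)))
    (Sum.inr (Sum.inr (Sum.inl i))) = 0 := rfl
lemma gdBr_ye_x : gdBr hd Bf (Sum.inr (Sum.inr (Sum.inl j)))
    (Sum.inr (Sum.inr (Sum.inr i))) = if i = j then -(gdW hd Bf i) else 0 := rfl
lemma gdBr_x_zl : gdBr hd Bf (Sum.inr (Sum.inr (Sum.inr j))) (Sum.inl i) = 0 := rfl
lemma gdBr_x_yo : gdBr hd Bf (Sum.inr (Sum.inr (Sum.inr j))) (Sum.inr (Sum.inl i)) =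
    if j = i then Bf (zI (i0 hd)) else 0 := rfl
lemma gdBr_x_ye : gdBr hd Bf (Sum.inr (Sum.inr (Sum.inr j)))
    (Sum.inr (Sum.inr (Sum.inl i))) = if j = i then gdW hd Bf j else 0 := rfl
lemma gdBr_x_x : gdBr hd Bf (Sum.inr (Sum.inr (Sum.inr j)))
    (Sum.inr (Sum.inr (Sum.inr i))) = 0 := rfl

end BrLemmas

end Aux

theorem coords_step {d : ℕ} (hd : 2 ≤ d) (L : Type) [LieRing L] [LieAlgebra ℝ L]
    (B : Module.Basis (Idx d) ℝ L)
    (hbr : ∀ a b : Idx d, ⁅B a, B b⁆ = gdBr hd (fun c => B c) a b)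
    (z a b g x yo ye : Fin d → ℝ) :
    ∃ (X : L) (m : Module.Dual ℝ L),
      coords B m = pack z a b g ∧
      coords B (m + coad X m) =
        pack z (fun j => a j - x j * z (i0 hd)) (fun j => b j - x j * wv z j)
          (fun j => g j + yo j * z (i0 hd) + ye j * wv z j) := by
  classical
  set ξ : Idx d → ℝ := pack 0 yo ye x with hxi
  set m : Module.Dual ℝ L := (B.constr ℝ) (pack z a b g) with hmdef
  set X : L := ∑ c : Idx d, ξ c • B c with hX
  have hm : ∀ c, m (B c) = pack z a b g c := fun c => B.constr_basis _ _ _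
  have hmz : ∀ i, m (B (Sum.inl i)) = z i := fun i => hm _
  have hma : ∀ i, m (B (Sum.inr (Sum.inl i))) = a i := fun i => hm _
  have hmb : ∀ i, m (B (Sum.inr (Sum.inr (Sum.inl i)))) = b i := fun i => hm _
  have hmg : ∀ i, m (B (Sum.inr (Sum.inr (Sum.inr i)))) = g i := fun i => hm _
  have hgdW : ∀ j : Fin d, m (gdW hd (fun c => B c) j) = wv z j := by
    intro j
    simp only [gdW, wv]
    split_ifs with h
    · exact hm _
    · rw [map_sum]
      exact Finset.sum_congr rfl fun k _ => hm _
  have key : ∀ c : Idx d, (m + coad X m) (B c) =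
      m (B c) + ∑ e : Idx d, ξ e * m (gdBr hd (fun c => B c) c e) := by
    intro c
    have h1 : (coad X m) (B c) = m ⁅B c, X⁆ := rfl
    have h2 : ⁅B c, X⁆ = ∑ e : Idx d, ξ e • gdBr hd (fun c => B c) c e := by
      have had : ⁅B c, X⁆ = (LieAlgebra.ad ℝ L (B c)) X := rfl
      rw [had, hX, map_sum]
      refine Finset.sum_congr rfl fun e _ => ?_
      rw [map_smul, LieAlgebra.ad_apply, hbr]
    simp only [LinearMap.add_apply, h1, h2, map_sum, map_smul, smul_eq_mul]
  refine ⟨X, m, funext fun c => hm c, funext fun c => ?_⟩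
  show (m + coad X m) (B c) = _
  rw [key c]
  rcases c with i | j | j | j
  · -- Z row
    simp only [gdBr_zl, map_zero, mul_zero, Finset.sum_const_zero, add_zero]
    exact hmz i
  · -- Yo row
    have hsum : ∀ e : Idx d, ξ e * m (gdBr hd (fun c => B c) (Sum.inr (Sum.inl j)) e) =
        if e = xI j then -(x j * z (i0 hd)) else 0 := by
      intro e
      rcases e with k | k | k | k
      · simp [gdBr_yo_zl, xI]
      · simp [gdBr_yo_yo, xI]
      · simp [gdBr_yo_ye, xI]
      · rw [gdBr_yo_x]
        by_cases hkj : k = j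
        · subst hkj
          have h1 : m (B (zI (i0 hd))) = z (i0 hd) := hm _
          have h2 : ξ (Sum.inr (Sum.inr (Sum.inr k))) = x k := rfl
          simp [xI, h1, h2]
        · have : Sum.inr (Sum.inr (Sum.inr k)) ≠ xI j := by simp [xI, hkj]
          simp [hkj, this]
    rw [Finset.sum_congr rfl fun e _ => hsum e, Finset.sum_ite_eq' Finset.univ (xI j)]
    simp only [Finset.mem_univ, if_pos]
    rw [hma j]
    show a j + -(x j * z (i0 hd)) = a j - x j * z (i0 hd)
    ring
  · -- Ye row
    have hsum : ∀ e : Idx d, ξ e * m (gdBr hd (fun c => B c) (Sum.inr (Sum.inr (Sum.inl j))) e) =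
        if e = xI j then -(x j * wv z j) else 0 := by
      intro e
      rcases e with k | k | k | k
      · simp [gdBr_ye_zl, xI]
      · simp [gdBr_ye_yo, xI]
      · simp [gdBr_ye_ye, xI]
      · rw [gdBr_ye_x]
        by_cases hkj : k = j
        · subst hkj
          have h1 : m (gdW hd (fun c => B c) k) = wv z k := hgdW k
          have h2 : ξ (Sum.inr (Sum.inr (Sum.inr k))) = x k := rfl
          simp [xI, h1, h2]
        · have : Sum.inr (Sum.inr (Sum.inr k)) ≠ xI j := by simp [xI, hkj]
          simp [hkj, this]
    rw [Finset.sum_congr rfl fun e _ => hsum e, Finset.sum_ite_eq' Finset.univ (xI j)]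
    simp only [Finset.mem_univ, if_pos]
    rw [hmb j]
    show b j + -(x j * wv z j) = b j - x j * wv z j
    ring
  · -- X row
    have hsum : ∀ e : Idx d, ξ e * m (gdBr hd (fun c => B c) (Sum.inr (Sum.inr (Sum.inr j))) e) =
        (if e = yoI j then yo j * z (i0 hd) else 0) +
          (if e = yeI j then ye j * wv z j else 0) := by
      intro e
      rcases e with k | k | k | k
      · simp [gdBr_x_zl, yoI, yeI]
      · rw [gdBr_x_yo]
        by_cases hkj : j = k
        · subst hkj
          have h1 : m (B (zI (i0 hd))) = z (i0 hd) := hm _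
          have h2 : ξ (Sum.inr (Sum.inl j)) = yo j := rfl
          simp [yoI, yeI, h1, h2]
        · have hne : Sum.inr (Sum.inl k) ≠ yoI j := by
            simp only [yoI, ne_eq, Sum.inr.injEq, Sum.inl.injEq]
            exact fun h => hkj h.symm
          simp [hkj, hne, yeI]
      · rw [gdBr_x_ye]
        by_cases hkj : j = k
        · subst hkj
          have h1 : m (gdW hd (fun c => B c) j) = wv z j := hgdW j
          have h2 : ξ (Sum.inr (Sum.inr (Sum.inl j))) = ye j := rfl
          simp [yoI, yeI, h1, h2]
        · have hne : Sum.inr (Sum.inr (Sum.inl k)) ≠ yeI j := by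
            simp only [yeI, ne_eq, Sum.inr.injEq, Sum.inl.injEq]
            exact fun h => hkj h.symm
          simp [hkj, hne, yoI]
      · simp [gdBr_x_x, yoI, yeI, xI]
    rw [Finset.sum_congr rfl fun e _ => hsum e, Finset.sum_add_distrib,
      Finset.sum_ite_eq' Finset.univ (yoI j), Finset.sum_ite_eq' Finset.univ (yeI j)]
    simp only [Finset.mem_univ, if_pos]
    rw [hmg j]
    show g j + (yo j * z (i0 hd) + ye j * wv z j) = g j + yo j * z (i0 hd) + ye j * wv z j
    ring


lemma analysis {d : ℕ} (hd : 2 ≤ d) (p : (Idx d → ℝ) → ℝ) (hp : Continuous p)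
    (hB1 : ∀ z a b g x yo ye : Fin d → ℝ,
      p (pack z (fun j => a j - x j * z (i0 hd)) (fun j => b j - x j * wv z j)
          (fun j => g j + yo j * z (i0 hd) + ye j * wv z j)) = p (pack z a b g)) :
    ∀ a b g : Fin d → ℝ, p (pack 0 a b g) = p (pack (0 : Fin d → ℝ) 0 0 0) := by
  classical
  -- Step B2 : the `γ` (X-block) coordinates are irrelevant.
  have hB2 : ∀ z a b g g' : Fin d → ℝ, p (pack z a b g') = p (pack z a b g) := by
    intro z a b g g'
    set zb : Fin d → ℝ := fun k => if k = i0 hd then 0 else z k with hzb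
    set zd : Fin d → ℝ := fun k => if k = i0 hd then 1 else 0 with hzd
    have hzrec : zb + z (i0 hd) • zd = z := by
      funext k
      by_cases h : k = i0 hd
      · subst h; simp [zb, zd]
      · simp [zb, zd, h]
    have h0 : ∀ t : ℝ, (zb + t • zd) (i0 hd) = t := by
      intro t; simp [zb, zd]
    have hw : ∀ t : ℝ, wv (zb + t • zd) = wv z := by
      intro t; funext j
      simp only [wv]
      split_ifs with h
      · have hne : (⟨(j : ℕ) + 1, by omega⟩ : Fin d) ≠ i0 hd := by
          simp [i0, Fin.ext_iff]
        simp [zb, zd, hne]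
      · refine Finset.sum_congr rfl fun k hk => ?_
        have hk' : 0 < (k : ℕ) := by simpa using hk
        have hne : k ≠ i0 hd := by
          intro hcon
          rw [hcon] at hk'
          simp [i0] at hk'
        simp [zb, zd, hne]
    have heq : ∀ t : ℝ, t ≠ 0 →
        p (pack (zb + t • zd) a b g') = p (pack (zb + t • zd) a b g) := by
      intro t ht
      have h := hB1 (zb + t • zd) a b g 0 (fun j => (g' j - g j) / t) 0
      rw [h0 t, hw t] at h
      have e1 : (fun j => a j - (0 : Fin d → ℝ) j * t) = a := by funext j; simp
      have e2 : (fun j => b j - (0 : Fin d → ℝ) j * wv z j) = b := by funext j; simp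
      have e3 : (fun j => g j + (g' j - g j) / t * t + (0 : Fin d → ℝ) j * wv z j) = g' := by
        funext j; field_simp; simp only [Pi.zero_apply]; ring
      rw [e1, e2, e3] at h
      exact h
    have hfun : (fun t : ℝ => p (pack (zb + t • zd) a b g')) =
        fun t : ℝ => p (pack (zb + t • zd) a b g) :=
      Continuous.ext_on (dense_compl_singleton (0 : ℝ))
        (cont_curve p hp zb zd a b g') (cont_curve p hp zb zd a b g)
        (fun t ht => heq t ht)
    have := congrFun hfun (z (i0 hd))
    rwa [hzrec] at this
  -- Step B3 : reduction of the `α` (odd Y) coordinates.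
  have hB3 : ∀ a b c : Fin d → ℝ,
      c (ilast hd) = ∑ j ∈ Finset.univ.filter (fun j : Fin d => (j : ℕ) < d - 1), c j →
      p (pack 0 a b 0) = p (pack 0 0 (fun j => b j - c j * a j) 0) := by
    intro a b c hc
    set zd : Fin d → ℝ := fun k => if (k : ℕ) = 0 then 1 else c ⟨(k : ℕ) - 1, by omega⟩ with hzd
    have h0 : ∀ t : ℝ, ((0 : Fin d → ℝ) + t • zd) (i0 hd) = t := by
      intro t; simp [zd, i0]
    have hw : ∀ (t : ℝ) (j : Fin d), wv ((0 : Fin d → ℝ) + t • zd) j = t * c j := by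
      intro t j
      simp only [wv]
      split_ifs with h
      · have h1 : ((⟨(j : ℕ) + 1, by omega⟩ : Fin d) : ℕ) ≠ 0 := by simp
        have h2 : (⟨(⟨(j : ℕ) + 1, by omega⟩ : Fin d) - 1, by omega⟩ : Fin d) = j := by
          simp [Fin.ext_iff]
        simp only [Pi.add_apply, Pi.zero_apply, Pi.smul_apply, smul_eq_mul, zd, h1,
          if_neg h1, zero_add]
        rw [h2]
        simp
      · have hj : j = ilast hd := by
          have := j.isLt
          simp only [ilast, Fin.ext_iff]; omega
        subst hj
        have hsum : ∑ k ∈ Finset.univ.filter (fun k : Fin d => 0 < (k : ℕ)),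
            ((0 : Fin d → ℝ) + t • zd) k
            = ∑ k ∈ Finset.univ.filter (fun k : Fin d => 0 < (k : ℕ)),
              t * c ⟨(k : ℕ) - 1, by omega⟩ := by
          refine Finset.sum_congr rfl fun k hk => ?_
          have hk' : 0 < (k : ℕ) := by simpa using hk
          have hk0 : (k : ℕ) ≠ 0 := by omega
          simp [zd, hk0]
        rw [hsum, ← Finset.mul_sum]
        congr 1
        rw [hc]
        refine Finset.sum_nbij' (fun k => (⟨(k : ℕ) - 1, by omega⟩ : Fin d))
          (fun j => (⟨if (j : ℕ) + 1 < d then (j : ℕ) + 1 else 0, by split <;> omega⟩ : Fin d))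
          ?_ ?_ ?_ ?_ ?_
        · intro k hk
          have hk' : 0 < (k : ℕ) := by simpa using hk
          have := k.isLt
          simp only [Finset.mem_filter, Finset.mem_univ, true_and]
          omega
        · intro j hj
          have hj' : (j : ℕ) < d - 1 := by simpa using hj
          simp only [Finset.mem_filter, Finset.mem_univ, true_and]
          split <;> omega
        · intro k hk
          have hk' : 0 < (k : ℕ) := by simpa using hk
          have := k.isLt
          simp only [Fin.ext_iff]
          split <;> omega
        · intro j hj
          have hj' : (j : ℕ) < d - 1 := by simpa using hj
          simp only [Fin.ext_iff]
          split <;> omega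
        · intro k hk
          rfl
    have heq : ∀ t : ℝ, t ≠ 0 →
        p (pack ((0 : Fin d → ℝ) + t • zd) 0 (fun j => b j - c j * a j) 0) =
          p (pack ((0 : Fin d → ℝ) + t • zd) a b 0) := by
      intro t ht
      have h := hB1 ((0 : Fin d → ℝ) + t • zd) a b 0 (fun j => a j / t) 0 0
      rw [h0 t] at h
      have e1 : (fun j => a j - a j / t * t) = (0 : Fin d → ℝ) := by
        funext j; field_simp; simp
      have e2 : (fun j => b j - a j / t * wv ((0 : Fin d → ℝ) + t • zd) j) =
          fun j => b j - c j * a j := by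
        funext j; rw [hw t j]; field_simp
      have e3 : (fun j => (0 : Fin d → ℝ) j + (0 : Fin d → ℝ) j * ((0 : Fin d → ℝ) + t • zd) (i0 hd)
          + (0 : Fin d → ℝ) j * wv ((0 : Fin d → ℝ) + t • zd) j) = (0 : Fin d → ℝ) := by
        funext j; simp
      rw [e1, e2] at h
      convert h using 3
      funext j; simp
    have hfun : (fun t : ℝ => p (pack ((0 : Fin d → ℝ) + t • zd) 0 (fun j => b j - c j * a j) 0)) =
        fun t : ℝ => p (pack ((0 : Fin d → ℝ) + t • zd) a b 0) :=
      Continuous.ext_on (dense_compl_singleton (0 : ℝ))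
        (cont_curve p hp 0 zd 0 (fun j => b j - c j * a j) 0) (cont_curve p hp 0 zd a b 0)
        (fun t ht => heq t ht)
    have h := congrFun hfun 0
    have hz0 : (0 : Fin d → ℝ) + (0 : ℝ) • zd = 0 := by funext k; simp
    rw [hz0] at h
    exact h.symm
  -- Step B4 : translations of the `β` block in coordinates `j` and `d-1`.
  have hB4 : ∀ (j : Fin d), (j : ℕ) < d - 1 → ∀ (b : Fin d → ℝ) (s r : ℝ),
      p (pack 0 0 (fun k => b k + (if k = j then s else 0) + (if k = ilast hd then r else 0)) 0) =
        p (pack 0 0 b 0) := by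
    intro j hj b s r
    have hjl : j ≠ ilast hd := by
      simp only [ne_eq, ilast, Fin.ext_iff]
      omega
    set a : Fin d → ℝ := fun k => if k = j then s else if k = ilast hd then r else 0 with ha
    set c : Fin d → ℝ := fun k => if k = j then 1 else if k = ilast hd then 1 else 0 with hcdef
    set bb : Fin d → ℝ :=
      fun k => b k + (if k = j then s else 0) + (if k = ilast hd then r else 0) with hbb
    have hc : c (ilast hd) = ∑ k ∈ Finset.univ.filter (fun k : Fin d => (k : ℕ) < d - 1), c k := by
      have h1 : c (ilast hd) = 1 := by
        have hne : ilast hd ≠ j := Ne.symm hjl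
        simp [c, hne]
      have h2 : ∀ k ∈ Finset.univ.filter (fun k : Fin d => (k : ℕ) < d - 1),
          c k = if k = j then 1 else 0 := by
        intro k hk
        have hk' : (k : ℕ) < d - 1 := by simpa using hk
        have : k ≠ ilast hd := by simp only [ne_eq, ilast, Fin.ext_iff]; omega
        simp [c, this]
      rw [h1, Finset.sum_congr rfl h2, Finset.sum_ite_eq' _ j]
      simp [hj]
    have hzero : c (ilast hd) = ∑ k ∈ Finset.univ.filter (fun k : Fin d => (k : ℕ) < d - 1),
        c k := hc
    have t1 := hB3 a bb c hc
    have t2 := hB3 a bb 0 (by simp)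
    have e1 : (fun k => bb k - c k * a k) = b := by
      funext k
      by_cases h1 : k = j
      · subst h1; simp [bb, c, a, hjl]
      · by_cases h2 : k = ilast hd
        · subst h2; simp [bb, c, a, h1]
        · simp [bb, c, a, h1, h2]
    have e2 : (fun k => bb k - (0 : Fin d → ℝ) k * a k) = bb := by funext k; simp
    rw [e1] at t1
    rw [e2] at t2
    rw [← t2, t1]
  -- Step B5 : the `β` block can be removed entirely.
  have hB5 : ∀ b : Fin d → ℝ, p (pack 0 0 b 0) = p (pack (0 : Fin d → ℝ) 0 0 0) := by
    have trunc : ∀ n : ℕ, n ≤ d - 1 → ∀ b : Fin d → ℝ,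
        p (pack 0 0 b 0) = p (pack 0 0 (fun k => if n ≤ (k : ℕ) then b k else 0) 0) := by
      intro n
      induction n with
      | zero =>
        intro _ b
        have : (fun k : Fin d => if 0 ≤ (k : ℕ) then b k else 0) = b := by
          funext k; simp
        rw [this]
      | succ n ih =>
        intro hn b
        have hjn : n < d - 1 := by omega
        set jn : Fin d := ⟨n, by omega⟩ with hjndef
        have h1 := ih (by omega) b
        have h2 := hB4 jn hjn (fun k => if n + 1 ≤ (k : ℕ) then b k else 0) (b jn) 0
        have e : (fun k : Fin d => (if n + 1 ≤ (k : ℕ) then b k else 0) + (if k = jn then b jn else 0)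
            + (if k = ilast hd then (0 : ℝ) else 0)) =
            (fun k : Fin d => if n ≤ (k : ℕ) then b k else 0) := by
          funext k
          by_cases hk : k = jn
          · subst hk
            simp [jn]
          · have hkn : (k : ℕ) ≠ n := by
              intro h
              exact hk (by simp [jn, Fin.ext_iff, h])
            by_cases hge : n + 1 ≤ (k : ℕ)
            · have : n ≤ (k : ℕ) := by omega
              simp [hge, this, hk]
            · have : ¬ n ≤ (k : ℕ) := by omega
              simp [hge, this, hk]
        rw [e] at h2
        rw [h1, ← h2]
    intro b
    have h1 := trunc (d - 1) le_rfl b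
    have h2 := hB4 (i0 hd) (by simp [i0]; omega) 0 0 (-(b (ilast hd)))
    have e1 : (fun k : Fin d => if d - 1 ≤ (k : ℕ) then b k else 0) =
        (fun k => (0 : Fin d → ℝ) k + (if k = i0 hd then (0:ℝ) else 0)
          + (if k = ilast hd then b (ilast hd) else 0)) := by
      funext k
      by_cases hk : k = ilast hd
      · subst hk; rw [if_pos (show d - 1 ≤ ((ilast hd : Fin d) : ℕ) from le_of_eq rfl), ite_self, if_pos rfl]; simp
      · have hk' : (k : ℕ) < d - 1 := by
          have := k.isLt
          have : (k : ℕ) ≠ d - 1 := fun h => hk (by simp [ilast, Fin.ext_iff, h])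
          omega
        have : ¬ d - 1 ≤ (k : ℕ) := by omega
        simp [this, hk]
    have h3 := hB4 (i0 hd) (by simp [i0]; omega) 0 0 (b (ilast hd))
    rw [h1, e1, h3]
  -- Conclusion.
  intro a b g
  rw [hB2 0 a b 0 g, hB3 a b 0 (by simp)]
  have : (fun j => b j - (0 : Fin d → ℝ) j * a j) = b := by funext j; simp
  rw [this, hB5 b]

/-- For every `d ≥ 2`, `ICor(𝔤_d*) = 𝔷_d^⊥`: the set of `ℓ ∈ 𝔤_d*` with
`P(ℓ) = P(0)` for every `Ad*(G_d)`-invariant polynomial `P` is exactly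
`{ℓ : ℓ(Z_1) = ⋯ = ℓ(Z_d) = 0}`. -/
theorem icor_gd (d : ℕ) (hd : 2 ≤ d) (L : Type) [LieRing L] [LieAlgebra ℝ L]
    (B : Module.Basis (Idx d) ℝ L)
    (hbr : ∀ a b : Idx d, ⁅B a, B b⁆ = gdBr hd (fun c => B c) a b) :
    {ℓ : Module.Dual ℝ L | ∀ P : MvPolynomial (Idx d) ℝ,
        (∀ (X : L) (m : Module.Dual ℝ L),
          MvPolynomial.eval (coords B (m + coad X m)) P = MvPolynomial.eval (coords B m) P) →
        MvPolynomial.eval (coords B ℓ) P = MvPolynomial.eval (fun _ : Idx d => (0 : ℝ)) P}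
      = {ℓ : Module.Dual ℝ L | ∀ i : Fin d, ℓ (B (zI i)) = 0} := by
  ext ℓ
  simp only [Set.mem_setOf_eq]
  constructor
  · -- ICor ⊆ 𝔷⊥ : use the invariant polynomials given by the central coordinates.
    intro hℓ i
    have hcentral : ∀ Y : L, ⁅B (zI i), Y⁆ = 0 := by
      have had : LieAlgebra.ad ℝ L (B (zI i)) = 0 := by
        apply B.ext
        intro c
        rw [LieAlgebra.ad_apply, hbr, zI, gdBr_zl]
        rfl
      intro Y
      have : LieAlgebra.ad ℝ L (B (zI i)) Y = 0 := by rw [had]; rfl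
      rwa [LieAlgebra.ad_apply] at this
    have h := hℓ (MvPolynomial.X (zI i)) ?_
    · simpa [coords] using h
    · intro X m
      simp only [MvPolynomial.eval_X, coords, LinearMap.add_apply]
      have : (coad X m) (B (zI i)) = m ⁅B (zI i), X⁆ := rfl
      rw [this, hcentral X, map_zero, add_zero]
  · -- 𝔷⊥ ⊆ ICor : the invariance identity forces constancy on the annihilator of the center.
    intro hz P hP
    set p : (Idx d → ℝ) → ℝ := fun η => MvPolynomial.eval η P with hpdef
    have hp : Continuous p := P.continuous_eval
    have hB1 : ∀ z a b g x yo ye : Fin d → ℝ,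
        p (pack z (fun j => a j - x j * z (i0 hd)) (fun j => b j - x j * wv z j)
            (fun j => g j + yo j * z (i0 hd) + ye j * wv z j)) = p (pack z a b g) := by
      intro z a b g x yo ye
      obtain ⟨X, m, h1, h2⟩ := coords_step hd L B hbr z a b g x yo ye
      have := hP X m
      rw [h1, h2] at this
      exact this
    have hcoords : coords B ℓ = pack 0 (fun j => ℓ (B (yoI j))) (fun j => ℓ (B (yeI j)))
        (fun j => ℓ (B (xI j))) := by
      funext c
      rcases c with i | i | i | i
      · exact hz i
      · rfl
      · rfl
      · rfl
    have h0 : (fun _ : Idx d => (0 : ℝ)) = pack (0 : Fin d → ℝ) 0 0 0 := by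
      funext c
      rcases c with i | i | i | i <;> rfl
    show p (coords B ℓ) = p (fun _ : Idx d => (0 : ℝ))
    rw [hcoords, h0]
    exact analysis hd p hp hB1 _ _ _
end

section
/- For every integer d ≥ 2, the cortex Cor(𝔤_d*) is strictly contained in 𝔷_d^⊥: one has Cor(𝔤_d*) ⊆ 𝔷_d^⊥, and there exists ℓ ∈ 𝔷_d^⊥ (for example ℓ with ℓ(Y_{2j−1}) = 1 for j = 1,…,d, ℓ(Y_{2j}) = 0 for j = 1,…,d−1, ℓ(Y_{2d}) = 1, and all other coordinates 0) that does not belong to Cor(𝔤_d*). -/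
section
variable {d : ℕ} (hd : 2 ≤ d) (L : Type) [LieRing L] [LieAlgebra ℝ L]
  (B : Module.Basis (Idx d) ℝ L)
  (hbr : ∀ a b : Idx d, ⁅B a, B b⁆ = gdBr hd (fun c => B c) a b)

include hbr

lemma br_expand (a : Idx d) (X : L) :
    ⁅B a, X⁆ = ∑ b : Idx d, B.repr X b • gdBr hd (fun c => B c) a b := by
  conv_lhs => rw [← B.sum_repr X, show ⁅B a, ∑ i : Idx d, B.repr X i • B i⁆ =
      LieAlgebra.ad ℝ L (B a) (∑ i : Idx d, B.repr X i • B i) from rfl]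
  rw [map_sum]
  exact Finset.sum_congr rfl fun b _ => by
    rw [map_smul, LieAlgebra.ad_apply, hbr]

lemma br_z (i : Fin d) (X : L) : ⁅B (zI i), X⁆ = 0 := by
  rw [br_expand hd L B hbr]
  apply Finset.sum_eq_zero
  intro b _
  have : gdBr hd (fun c => B c) (zI i) b = 0 := by
    rcases b with _ | (_ | (_ | _)) <;> rfl
  rw [this, smul_zero]

lemma br_yo (j : Fin d) (X : L) :
    ⁅B (yoI j), X⁆ = -(B.repr X (xI j)) • B (zI ⟨0, by omega⟩) := by
  rw [br_expand hd L B hbr]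
  rw [Finset.sum_eq_single (xI j)]
  · show B.repr X (xI j) • gdBr hd (fun c => B c) (yoI j) (xI j) = _
    show B.repr X (xI j) • (if j = j then -(B (zI ⟨0, by omega⟩)) else 0) = _
    rw [if_pos rfl, smul_neg, neg_smul]
  · intro b _ hb
    rcases b with z | (o | (e | x))
    · exact smul_zero _
    · exact smul_zero _
    · exact smul_zero _
    · show B.repr X _ • (if x = j then _ else 0) = 0
      rw [if_neg (fun h => hb (by simp [xI, h])), smul_zero]
  · intro h; exact absurd (Finset.mem_univ _) h

lemma br_ye (j : Fin d) (X : L) :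
    ⁅B (yeI j), X⁆ = -(B.repr X (xI j)) • gdW hd (fun c => B c) j := by
  rw [br_expand hd L B hbr]
  rw [Finset.sum_eq_single (xI j)]
  · show B.repr X (xI j) • (if j = j then -(gdW hd (fun c => B c) j) else 0) = _
    rw [if_pos rfl, smul_neg, neg_smul]
  · intro b _ hb
    rcases b with z | (o | (e | x))
    · exact smul_zero _
    · exact smul_zero _
    · exact smul_zero _
    · show B.repr X _ • (if x = j then _ else 0) = 0
      rw [if_neg (fun h => hb (by simp [xI, h])), smul_zero]
  · intro h; exact absurd (Finset.mem_univ _) h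
end
lemma Qd_vanish (d : ℕ) (hd : 2 ≤ d) (x c' : Fin d → ℝ) (c : ℝ)
    (hsum : c' ⟨d - 1, by omega⟩ =
      ∑ i ∈ Finset.univ.filter (fun i : Fin d => (i : ℕ) < d - 1), c' i) :
    Qd d hd (fun j => -(x j) * c) (fun j => -(x j) * c' j) = 0 := by
  set S := Finset.univ.filter (fun i : Fin d => (i : ℕ) < d - 1) with hS
  have h0 : (⟨0, by omega⟩ : Fin d) ∈ S := by
    simp only [hS, Finset.mem_filter, Finset.mem_univ, true_and]; omega
  by_cases hc : c = 0
  · unfold Qd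
    rw [hc]
    rw [Finset.prod_eq_zero h0 (by ring)]
    ring
  · have hSi : ∀ i : Fin d, i ∈ S →
        Finset.univ.filter (fun j : Fin d => (j : ℕ) < d - 1 ∧ j ≠ i) = S.erase i := by
      intro i _
      ext j
      simp only [hS, Finset.mem_filter, Finset.mem_univ, true_and, Finset.mem_erase]
      tauto
    have key : c * Qd d hd (fun j => -(x j) * c) (fun j => -(x j) * c' j) = 0 := by
      unfold Qd
      have e1 : c * ((-(x ⟨d - 1, by omega⟩) * c) *
            (∑ i ∈ S, (-(x i) * c' i) *
              ∏ j ∈ Finset.univ.filter (fun j : Fin d => (j : ℕ) < d - 1 ∧ j ≠ i),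
                (-(x j) * c))
          - (-(x ⟨d - 1, by omega⟩) * c' ⟨d - 1, by omega⟩) * ∏ j ∈ S, (-(x j) * c))
          = (-(x ⟨d - 1, by omega⟩) * c) *
              (∑ i ∈ S, c * ((-(x i) * c' i) *
                ∏ j ∈ Finset.univ.filter (fun j : Fin d => (j : ℕ) < d - 1 ∧ j ≠ i),
                  (-(x j) * c)))
            - (c * (-(x ⟨d - 1, by omega⟩) * c' ⟨d - 1, by omega⟩)) * ∏ j ∈ S, (-(x j) * c) := by
        rw [← Finset.mul_sum]; ring
      rw [e1]
      have e2 : ∀ i ∈ S, c * ((-(x i) * c' i) *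
            ∏ j ∈ Finset.univ.filter (fun j : Fin d => (j : ℕ) < d - 1 ∧ j ≠ i),
              (-(x j) * c)) = c' i * ∏ j ∈ S, (-(x j) * c) := by
        intro i hi
        rw [hSi i hi, ← Finset.mul_prod_erase S (fun j => -(x j) * c) hi]
        ring
      rw [Finset.sum_congr rfl e2, ← Finset.sum_mul, ← hsum]
      ring
    exact (mul_eq_zero.mp key).resolve_left hc
/-- Coordinates of the witness functional. -/
def ellV (d : ℕ) : Idx d → ℝ
  | Sum.inl _ => 0
  | Sum.inr (Sum.inl _) => 1
  | Sum.inr (Sum.inr (Sum.inl e)) => if (e : ℕ) = d - 1 then 1 else 0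
  | Sum.inr (Sum.inr (Sum.inr _)) => 0

/-- For every `d ≥ 2`, the cortex `Cor(𝔤_d*)` is strictly contained in
`𝔷_d^⊥`: it is contained in it, and the functional `ℓ` with `ℓ(Y_{2j−1}) = 1` for
`j = 1,…,d`, `ℓ(Y_{2j}) = 0` for `j = 1,…,d−1`, `ℓ(Y_{2d}) = 1` and all other
coordinates `0` belongs to `𝔷_d^⊥` but not to `Cor(𝔤_d*)`. -/
theorem cortex_proper_gd (d : ℕ) (hd : 2 ≤ d) (L : Type) [LieRing L] [LieAlgebra ℝ L]
    (B : Module.Basis (Idx d) ℝ L)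
    (hbr : ∀ a b : Idx d, ⁅B a, B b⁆ = gdBr hd (fun c => B c) a b) :
    corSet B ⊆ {ℓ : Module.Dual ℝ L | ∀ i : Fin d, ℓ (B (zI i)) = 0}
    ∧ ∃ ℓ : Module.Dual ℝ L,
        (∀ i : Fin d, ℓ (B (zI i)) = 0) ∧
        (∀ j : Fin d, ℓ (B (yoI j)) = 1) ∧
        (∀ j : Fin d, (j : ℕ) < d - 1 → ℓ (B (yeI j)) = 0) ∧
        ℓ (B (yeI ⟨d - 1, by omega⟩)) = 1 ∧
        (∀ k : Fin d, ℓ (B (xI k)) = 0) ∧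
        ℓ ∉ corSet B := by
  classical
  have hcoadz : ∀ (X : L) (f : Module.Dual ℝ L) (i : Fin d), coad X f (B (zI i)) = 0 := by
    intro X f i
    show f ⁅B (zI i), X⁆ = _
    rw [br_z hd L B hbr, map_zero]
  have hcoadyo : ∀ (X : L) (f : Module.Dual ℝ L) (j : Fin d),
      coad X f (B (yoI j)) = -(B.repr X (xI j)) * f (B (zI ⟨0, by omega⟩)) := by
    intro X f j
    show f ⁅B (yoI j), X⁆ = _
    rw [br_yo hd L B hbr, map_smul, smul_eq_mul]
  have hcoadye : ∀ (X : L) (f : Module.Dual ℝ L) (j : Fin d),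
      coad X f (B (yeI j)) = -(B.repr X (xI j)) * f (gdW hd (fun a => B a) j) := by
    intro X f j
    show f ⁅B (yeI j), X⁆ = _
    rw [br_ye hd L B hbr, map_smul, smul_eq_mul]
  constructor
  · intro ℓ hℓ i
    have hcl : IsClosed {η : Idx d → ℝ | η (zI i) = 0} :=
      isClosed_eq (continuous_apply _) continuous_const
    have hsub : coords B '' adStar L ⊆ {η : Idx d → ℝ | η (zI i) = 0} := by
      rintro _ ⟨g, ⟨X, f, rfl⟩, rfl⟩
      exact hcoadz X f i
    exact closure_minimal hsub hcl hℓ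
  · refine ⟨B.constr ℝ (ellV d), ?_, ?_, ?_, ?_, ?_, ?_⟩
    · intro i; rw [Module.Basis.constr_basis]; rfl
    · intro j; rw [Module.Basis.constr_basis]; rfl
    · intro j hj
      rw [Module.Basis.constr_basis]
      show (if (j : ℕ) = d - 1 then (1:ℝ) else 0) = 0
      rw [if_neg (by omega)]
    · rw [Module.Basis.constr_basis]
      show (if ((⟨d - 1, by omega⟩ : Fin d) : ℕ) = d - 1 then (1:ℝ) else 0) = 1
      rw [if_pos rfl]
    · intro k; rw [Module.Basis.constr_basis]; rfl
    · intro hmem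
      have hF : Continuous (fun η : Idx d → ℝ =>
          Qd d hd (fun i => η (yoI i)) (fun i => η (yeI i))) := by
        unfold Qd
        apply Continuous.sub
        · exact (continuous_apply _).mul (continuous_finset_sum _ fun i _ =>
            (continuous_apply _).mul (continuous_finset_prod _ fun j _ => continuous_apply _))
        · exact (continuous_apply _).mul (continuous_finset_prod _ fun j _ => continuous_apply _)
      have hcl : IsClosed {η : Idx d → ℝ |
          Qd d hd (fun i => η (yoI i)) (fun i => η (yeI i)) = 0} :=
        isClosed_eq hF continuous_const
      have hsub : coords B '' adStar L ⊆ {η : Idx d → ℝ |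
          Qd d hd (fun i => η (yoI i)) (fun i => η (yeI i)) = 0} := by
        rintro _ ⟨g, ⟨X, f, rfl⟩, rfl⟩
        show Qd d hd (fun i => coad X f (B (yoI i))) (fun i => coad X f (B (yeI i))) = 0
        have e1 : (fun i => coad X f (B (yoI i)))
            = fun i => -(B.repr X (xI i)) * f (B (zI ⟨0, by omega⟩)) :=
          funext fun i => hcoadyo X f i
        have e2 : (fun i => coad X f (B (yeI i)))
            = fun i => -(B.repr X (xI i)) * f (gdW hd (fun a => B a) i) :=
          funext fun i => hcoadye X f i
        rw [e1, e2]
        apply Qd_vanish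
        -- hsum : f (gdW ⟨d-1⟩) = ∑_{i ∈ S} f (gdW i)
        have hg1 : gdW hd (fun a => B a) (⟨d - 1, by omega⟩ : Fin d)
            = ∑ m ∈ Finset.univ.filter (fun m : Fin d => 0 < (m : ℕ)), B (zI m) := by
          unfold gdW
          rw [dif_neg (show ¬(d - 1 < d - 1) by omega)]
        have hg2 : ∀ i ∈ Finset.univ.filter (fun i : Fin d => (i : ℕ) < d - 1),
            f (gdW hd (fun a => B a) i)
              = f (B (zI ⟨min ((i : ℕ) + 1) (d - 1), by omega⟩)) := by
          intro i hi
          have hi' : (i : ℕ) < d - 1 := (Finset.mem_filter.mp hi).2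
          unfold gdW
          rw [dif_pos hi']
          have he : (⟨(i : ℕ) + 1, by omega⟩ : Fin d)
              = (⟨min ((i : ℕ) + 1) (d - 1), by omega⟩ : Fin d) :=
            Fin.ext (by show (i : ℕ) + 1 = min ((i : ℕ) + 1) (d - 1); omega)
          rw [he]
        rw [hg1, map_sum, Finset.sum_congr rfl hg2]
        refine Finset.sum_nbij' (fun m : Fin d => (⟨(m : ℕ) - 1, by omega⟩ : Fin d))
          (fun i : Fin d => (⟨min ((i : ℕ) + 1) (d - 1), by omega⟩ : Fin d)) ?_ ?_ ?_ ?_ ?_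
        · intro m hm
          have hm' : 0 < (m : ℕ) := (Finset.mem_filter.mp hm).2
          refine Finset.mem_filter.mpr ⟨Finset.mem_univ _, ?_⟩
          show (m : ℕ) - 1 < d - 1
          have := m.isLt
          omega
        · intro i hi
          have hi' : (i : ℕ) < d - 1 := (Finset.mem_filter.mp hi).2
          refine Finset.mem_filter.mpr ⟨Finset.mem_univ _, ?_⟩
          show 0 < min ((i : ℕ) + 1) (d - 1)
          omega
        · intro m hm
          have hm' : 0 < (m : ℕ) := (Finset.mem_filter.mp hm).2
          have := m.isLt
          ext
          show min ((m : ℕ) - 1 + 1) (d - 1) = (m : ℕ)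
          omega
        · intro i hi
          have hi' : (i : ℕ) < d - 1 := (Finset.mem_filter.mp hi).2
          ext
          show min ((i : ℕ) + 1) (d - 1) - 1 = (i : ℕ)
          omega
        · intro m hm
          have hm' : 0 < (m : ℕ) := (Finset.mem_filter.mp hm).2
          have hml := m.isLt
          have : (⟨min (((⟨(m : ℕ) - 1, by omega⟩ : Fin d) : ℕ) + 1) (d - 1), by omega⟩ : Fin d)
              = m := by
            ext
            show min ((m : ℕ) - 1 + 1) (d - 1) = (m : ℕ)
            omega
          rw [this]
      have h0 := closure_minimal hsub hcl hmem
      have c1 : (fun i => coords B (B.constr ℝ (ellV d)) (yoI i)) = fun _ : Fin d => (1 : ℝ) :=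
        funext fun i => by rw [coords, Module.Basis.constr_basis]; rfl
      have c2 : (fun i => coords B (B.constr ℝ (ellV d)) (yeI i))
          = fun i : Fin d => if (i : ℕ) = d - 1 then (1 : ℝ) else 0 :=
        funext fun i => by rw [coords, Module.Basis.constr_basis]; rfl
      rw [Set.mem_setOf_eq, c1, c2] at h0
      have hval : Qd d hd (fun _ : Fin d => (1 : ℝ))
          (fun i : Fin d => if (i : ℕ) = d - 1 then (1 : ℝ) else 0) = -1 := by
        unfold Qd
        rw [Finset.prod_const_one, Finset.sum_eq_zero]
        · show (1 : ℝ) * 0 - (if d - 1 = d - 1 then (1:ℝ) else 0) * 1 = -1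
          rw [if_pos rfl]; ring
        · intro i hi
          have : (i : ℕ) < d - 1 := (Finset.mem_filter.mp hi).2
          show (if (i : ℕ) = d - 1 then (1:ℝ) else 0) * _ = 0
          rw [if_neg (by omega), zero_mul]
      rw [hval] at h0
      norm_num at h0
end

section
/- For every integer d ≥ 2 and every ℓ ∈ 𝔤_d* with z_1 = ℓ(Z_1) ≠ 0, the coadjoint orbit {ℓ + ad*_X ℓ : X ∈ 𝔤_d} of ℓ intersects the cross-section Σ_d = span(Z_1*, …, Z_d*, Y_2*, Y_4*, …, Y_{2d}*) in exactly one point, namely the functional P_d(ℓ) = Σ_{i=1}^{d} z_i Z_i* + Σ_{i=1}^{d−1} (y_{2i} − (z_{i+1}/z_1) y_{2i−1}) Y_{2i}* + (y_{2d} − ((z_2 + ⋯ + z_d)/z_1) y_{2d−1}) Y_{2d}*, where z_i = ℓ(Z_i) and y_j = ℓ(Y_j). -/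
section Aux

variable {d : ℕ} (hd : 2 ≤ d) {V : Type*} [AddCommGroup V] (B : Idx d → V)

lemma gdBr_z (i : Fin d) (a : Idx d) : gdBr hd B (zI i) a = 0 := by
  rcases a with k | k | k | k <;> rfl

lemma gdBr_yo_z (i k : Fin d) : gdBr hd B (yoI i) (zI k) = 0 := rfl
lemma gdBr_yo_yo_s15 (i k : Fin d) : gdBr hd B (yoI i) (yoI k) = 0 := rfl
lemma gdBr_yo_ye_s15 (i k : Fin d) : gdBr hd B (yoI i) (yeI k) = 0 := rfl
lemma gdBr_yo_x_s15 (i k : Fin d) :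
    gdBr hd B (yoI i) (xI k) = if k = i then -(B (zI ⟨0, by omega⟩)) else 0 := rfl

lemma gdBr_ye_z (i k : Fin d) : gdBr hd B (yeI i) (zI k) = 0 := rfl
lemma gdBr_ye_yo_s15 (i k : Fin d) : gdBr hd B (yeI i) (yoI k) = 0 := rfl
lemma gdBr_ye_ye_s15 (i k : Fin d) : gdBr hd B (yeI i) (yeI k) = 0 := rfl
lemma gdBr_ye_x_s15 (i k : Fin d) :
    gdBr hd B (yeI i) (xI k) = if k = i then -(gdW hd B k) else 0 := rfl

lemma gdBr_x_z (i k : Fin d) : gdBr hd B (xI i) (zI k) = 0 := rfl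
lemma gdBr_x_yo_s15 (i k : Fin d) :
    gdBr hd B (xI i) (yoI k) = if i = k then B (zI ⟨0, by omega⟩) else 0 := rfl
lemma gdBr_x_ye_s15 (i k : Fin d) :
    gdBr hd B (xI i) (yeI k) = if i = k then gdW hd B i else 0 := rfl
lemma gdBr_x_x_s15 (i k : Fin d) : gdBr hd B (xI i) (xI k) = 0 := rfl

lemma zI_ne_yoI (i k : Fin d) : zI i ≠ yoI k := by simp [zI, yoI]
lemma zI_ne_yeI (i k : Fin d) : zI i ≠ yeI k := by simp [zI, yeI]
lemma zI_ne_xI (i k : Fin d) : zI i ≠ xI k := by simp [zI, xI]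
lemma yeI_ne_yoI (i k : Fin d) : yeI i ≠ yoI k := by simp [yeI, yoI]
lemma yeI_ne_xI (i k : Fin d) : yeI i ≠ xI k := by simp [yeI, xI]
lemma yeI_inj (i k : Fin d) : yeI i = yeI k ↔ i = k := by simp [yeI]
lemma zI_inj (i k : Fin d) : zI i = zI k ↔ i = k := by simp [zI]
lemma xI_inj (i k : Fin d) : xI i = xI k ↔ i = k := by simp [xI]

end Aux

/-- For every `d ≥ 2` and every `ℓ ∈ 𝔤_d*` with `z_1 = ℓ(Z_1) ≠ 0`, the
coadjoint orbit of `ℓ` meets the cross-section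
`Σ_d = span(Z_1*,…,Z_d*, Y_2*, Y_4*, …, Y_{2d}*)` in exactly one point, namely
`P_d(ℓ) = Σ_i z_i Z_i* + Σ_{i<d} (y_{2i} − (z_{i+1}/z_1) y_{2i−1}) Y_{2i}*
          + (y_{2d} − ((z_2+⋯+z_d)/z_1) y_{2d−1}) Y_{2d}*`. -/
theorem cross_section_gd (d : ℕ) (hd : 2 ≤ d) (L : Type) [LieRing L] [LieAlgebra ℝ L]
    (B : Module.Basis (Idx d) ℝ L)
    (hbr : ∀ a b : Idx d, ⁅B a, B b⁆ = gdBr hd (fun c => B c) a b)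
    (ℓ : Module.Dual ℝ L) (hℓ : ℓ (B (zI ⟨0, by omega⟩)) ≠ 0) :
    {g : Module.Dual ℝ L | ∃ X : L, g = ℓ + coad X ℓ} ∩
        (Submodule.span ℝ
          ((Set.range fun i : Fin d => B.dualBasis (zI i)) ∪
            (Set.range fun i : Fin d => B.dualBasis (yeI i))) : Set (Module.Dual ℝ L))
      = {(∑ i : Fin d, ℓ (B (zI i)) • B.dualBasis (zI i))
          + (∑ j : Fin d, if hj : (j : ℕ) < d - 1 then
              (ℓ (B (yeI j))
                - ℓ (B (zI ⟨(j : ℕ) + 1, by omega⟩)) / ℓ (B (zI ⟨0, by omega⟩))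
                    * ℓ (B (yoI j))) • B.dualBasis (yeI j)
            else 0)
          + (ℓ (B (yeI ⟨d - 1, by omega⟩))
              - (∑ m ∈ Finset.univ.filter (fun m : Fin d => 0 < (m : ℕ)), ℓ (B (zI m)))
                  / ℓ (B (zI ⟨0, by omega⟩)) * ℓ (B (yoI ⟨d - 1, by omega⟩)))
              • B.dualBasis (yeI ⟨d - 1, by omega⟩)} := by
  have hd0 : 0 < d := by omega
  have hd0' : d - 1 < d := by omega
  have hz1 : ℓ (B (zI ⟨0, hd0⟩)) ≠ 0 := hℓ
  set wv : Fin d → ℝ := fun j => ℓ (gdW hd (fun c => B c) j) with hwv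
  have hw : ∀ j : Fin d, wv j = if hj : (j : ℕ) < d - 1 then ℓ (B (zI ⟨(j:ℕ)+1, by omega⟩))
      else ∑ m ∈ Finset.univ.filter (fun m : Fin d => 0 < (m : ℕ)), ℓ (B (zI m)) := by
    intro j
    simp only [hwv, gdW]
    split <;> simp [map_sum]
  -- general formula for coad on basis vectors
  have coadB : ∀ (X : L) (b : Idx d),
      coad X ℓ (B b) = ∑ a : Idx d, B.repr X a * ℓ (gdBr hd (fun c => B c) b a) := by
    intro X b
    have h0 : coad X ℓ (B b) = ℓ ⁅B b, X⁆ := rfl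
    have hsum : ⁅B b, ∑ a : Idx d, B.repr X a • B a⁆
        = ∑ a : Idx d, B.repr X a • ⁅B b, B a⁆ := by
      simpa only [LieAlgebra.ad_apply, lie_smul] using
        map_sum (LieAlgebra.ad ℝ L (B b)) (fun a => B.repr X a • B a) Finset.univ
    rw [h0]
    conv_lhs => rw [← B.sum_repr X]
    rw [hsum, map_sum]
    refine Finset.sum_congr rfl fun a _ => ?_
    rw [map_smul, hbr, smul_eq_mul]
  have hcz : ∀ (X : L) (k : Fin d), coad X ℓ (B (Sum.inl k)) = 0 := by
    intro X k
    rw [coadB]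
    refine Finset.sum_eq_zero fun a _ => ?_
    rcases a with m | m | m | m <;>
      simp [show ∀ m', gdBr hd (fun c => B c) (Sum.inl k) m' = 0 from fun m' => gdBr_z hd _ k m']
  have hcyo : ∀ (X : L) (j : Fin d),
      coad X ℓ (B (Sum.inr (Sum.inl j))) = -(B.repr X (xI j) * ℓ (B (zI ⟨0, hd0⟩))) := by
    intro X j
    rw [coadB, Finset.sum_eq_single (xI j)]
    · rw [show gdBr hd (fun c => B c) (Sum.inr (Sum.inl j)) (xI j)
          = -(B (zI ⟨0, hd0⟩)) from by rw [show (Sum.inr (Sum.inl j) : Idx d) = yoI j from rfl,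
            gdBr_yo_x_s15, if_pos rfl], map_neg]
      ring
    · intro a _ ha
      rcases a with m | m | m | m
      · rw [show gdBr hd (fun c => B c) (Sum.inr (Sum.inl j)) (Sum.inl m) = 0 from rfl]; simp
      · rw [show gdBr hd (fun c => B c) (Sum.inr (Sum.inl j)) (Sum.inr (Sum.inl m)) = 0 from rfl]
        simp
      · rw [show gdBr hd (fun c => B c) (Sum.inr (Sum.inl j)) (Sum.inr (Sum.inr (Sum.inl m)))
            = 0 from rfl]
        simp
      · have hm : m ≠ j := fun h => ha (by rw [h]; rfl)
        rw [show gdBr hd (fun c => B c) (Sum.inr (Sum.inl j)) (Sum.inr (Sum.inr (Sum.inr m)))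
            = (if m = j then -(B (zI ⟨0, hd0⟩)) else 0) from rfl, if_neg hm]
        simp
    · exact fun h => absurd (Finset.mem_univ _) h
  have hcye : ∀ (X : L) (j : Fin d),
      coad X ℓ (B (Sum.inr (Sum.inr (Sum.inl j)))) = -(B.repr X (xI j) * wv j) := by
    intro X j
    rw [coadB, Finset.sum_eq_single (xI j)]
    · rw [show gdBr hd (fun c => B c) (Sum.inr (Sum.inr (Sum.inl j))) (xI j)
          = -(gdW hd (fun c => B c) j) from by
            rw [show (Sum.inr (Sum.inr (Sum.inl j)) : Idx d) = yeI j from rfl, gdBr_ye_x_s15,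
              if_pos rfl], map_neg, hwv]
      ring
    · intro a _ ha
      rcases a with m | m | m | m
      · rw [show gdBr hd (fun c => B c) (Sum.inr (Sum.inr (Sum.inl j))) (Sum.inl m) = 0 from rfl]
        simp
      · rw [show gdBr hd (fun c => B c) (Sum.inr (Sum.inr (Sum.inl j))) (Sum.inr (Sum.inl m))
            = 0 from rfl]
        simp
      · rw [show gdBr hd (fun c => B c) (Sum.inr (Sum.inr (Sum.inl j)))
            (Sum.inr (Sum.inr (Sum.inl m))) = 0 from rfl]
        simp
      · have hm : m ≠ j := fun h => ha (by rw [h]; rfl)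
        rw [show gdBr hd (fun c => B c) (Sum.inr (Sum.inr (Sum.inl j)))
            (Sum.inr (Sum.inr (Sum.inr m)))
            = (if m = j then -(gdW hd (fun c => B c) m) else 0) from rfl, if_neg hm]
        simp
    · exact fun h => absurd (Finset.mem_univ _) h
  have hcx : ∀ (X : L) (i : Fin d),
      coad X ℓ (B (Sum.inr (Sum.inr (Sum.inr i))))
        = B.repr X (yoI i) * ℓ (B (zI ⟨0, hd0⟩)) + B.repr X (yeI i) * wv i := by
    intro X i
    rw [coadB, Fintype.sum_sum_type, Fintype.sum_sum_type, Fintype.sum_sum_type]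
    have h1 : ∀ k : Fin d, B.repr X (Sum.inl k) *
        ℓ (gdBr hd (fun c => B c) (Sum.inr (Sum.inr (Sum.inr i))) (Sum.inl k)) = 0 := by
      intro k
      rw [show gdBr hd (fun c => B c) (Sum.inr (Sum.inr (Sum.inr i))) (Sum.inl k) = 0 from rfl]
      simp
    have h2 : ∀ k : Fin d, B.repr X (Sum.inr (Sum.inl k)) *
        ℓ (gdBr hd (fun c => B c) (Sum.inr (Sum.inr (Sum.inr i))) (Sum.inr (Sum.inl k))) =
        if i = k then B.repr X (yoI k) * ℓ (B (zI ⟨0, hd0⟩)) else 0 := by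
      intro k
      rw [show gdBr hd (fun c => B c) (Sum.inr (Sum.inr (Sum.inr i))) (Sum.inr (Sum.inl k))
          = (if i = k then B (zI ⟨0, hd0⟩) else 0) from rfl]
      split <;> simp [yoI]
    have h3 : ∀ k : Fin d, B.repr X (Sum.inr (Sum.inr (Sum.inl k))) *
        ℓ (gdBr hd (fun c => B c) (Sum.inr (Sum.inr (Sum.inr i))) (Sum.inr (Sum.inr (Sum.inl k)))) =
        if i = k then B.repr X (yeI k) * wv k else 0 := by
      intro k
      rw [show gdBr hd (fun c => B c) (Sum.inr (Sum.inr (Sum.inr i))) (Sum.inr (Sum.inr (Sum.inl k)))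
          = (if i = k then gdW hd (fun c => B c) i else 0) from rfl]
      split
      · rename_i h; subst h; simp [hwv, yeI]
      · simp
    have h4 : ∀ k : Fin d, B.repr X (Sum.inr (Sum.inr (Sum.inr k))) *
        ℓ (gdBr hd (fun c => B c) (Sum.inr (Sum.inr (Sum.inr i))) (Sum.inr (Sum.inr (Sum.inr k)))) = 0 := by
      intro k
      rw [show gdBr hd (fun c => B c) (Sum.inr (Sum.inr (Sum.inr i))) (Sum.inr (Sum.inr (Sum.inr k)))
          = 0 from rfl]
      simp
    simp only [h1, h2, h3, h4, Finset.sum_const_zero, Finset.sum_ite_eq, Finset.mem_univ,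
      if_true, zero_add, add_zero]
  -- vanishing on the span
  have hvan : ∀ (a : Idx d), (∀ i : Fin d, a ≠ zI i) → (∀ i : Fin d, a ≠ yeI i) →
      ∀ g ∈ Submodule.span ℝ
        ((Set.range fun i : Fin d => B.dualBasis (zI i)) ∪
          (Set.range fun i : Fin d => B.dualBasis (yeI i))), g (B a) = 0 := by
    intro a h1 h2 g hg
    have hle : Submodule.span ℝ
        ((Set.range fun i : Fin d => B.dualBasis (zI i)) ∪
          (Set.range fun i : Fin d => B.dualBasis (yeI i))) ≤
        LinearMap.ker (LinearMap.applyₗ (R := ℝ) (B a)) := by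
      rw [Submodule.span_le]
      rintro f (⟨i, rfl⟩ | ⟨i, rfl⟩) <;>
        simp [LinearMap.mem_ker, Module.Basis.dualBasis_apply_self, h1 i, h2 i]
    simpa using hle hg
  -- coordinates of the distinguished point
  have hPz : ∀ k : Fin d, ((∑ i : Fin d, ℓ (B (zI i)) • B.dualBasis (zI i))
          + (∑ j : Fin d, if hj : (j : ℕ) < d - 1 then
              (ℓ (B (yeI j))
                - ℓ (B (zI ⟨(j : ℕ) + 1, by omega⟩)) / ℓ (B (zI ⟨0, by omega⟩))
                    * ℓ (B (yoI j))) • B.dualBasis (yeI j)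
            else 0)
          + (ℓ (B (yeI ⟨d - 1, by omega⟩))
              - (∑ m ∈ Finset.univ.filter (fun m : Fin d => 0 < (m : ℕ)), ℓ (B (zI m)))
                  / ℓ (B (zI ⟨0, by omega⟩)) * ℓ (B (yoI ⟨d - 1, by omega⟩)))
              • B.dualBasis (yeI ⟨d - 1, by omega⟩)) (B (Sum.inl k)) = ℓ (B (zI k)) := by
    intro k
    simp only [LinearMap.add_apply, LinearMap.sum_apply, LinearMap.smul_apply, smul_eq_mul,
      apply_dite (fun g : Module.Dual ℝ L => g (B (Sum.inl k))), LinearMap.zero_apply]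
    have e2 : (∑ j : Fin d, if hj : (j : ℕ) < d - 1 then
        (ℓ (B (yeI j)) - ℓ (B (zI ⟨(j : ℕ) + 1, by omega⟩)) / ℓ (B (zI ⟨0, by omega⟩))
          * ℓ (B (yoI j))) * (B.dualBasis (yeI j)) (B (Sum.inl k)) else 0) = 0 := by
      refine Finset.sum_eq_zero fun j _ => ?_
      split
      · rw [Module.Basis.dualBasis_apply_self, if_neg (by simp [yeI]), mul_zero]
      · rfl
    have e3 : (B.dualBasis (yeI ⟨d - 1, hd0'⟩)) (B (Sum.inl k)) = 0 := by
      rw [Module.Basis.dualBasis_apply_self, if_neg (by simp [yeI])]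
    rw [e2, e3, Finset.sum_eq_single k]
    · rw [Module.Basis.dualBasis_apply_self, if_pos (show (Sum.inl k : Idx d) = zI k from rfl)]
      ring
    · intro j _ hj
      rw [Module.Basis.dualBasis_apply_self,
        if_neg (fun h => hj (Eq.symm (by simpa [zI] using h))), mul_zero]
    · exact fun h => absurd (Finset.mem_univ _) h
  have hPyo : ∀ k : Fin d, ((∑ i : Fin d, ℓ (B (zI i)) • B.dualBasis (zI i))
          + (∑ j : Fin d, if hj : (j : ℕ) < d - 1 then
              (ℓ (B (yeI j))
                - ℓ (B (zI ⟨(j : ℕ) + 1, by omega⟩)) / ℓ (B (zI ⟨0, by omega⟩))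
                    * ℓ (B (yoI j))) • B.dualBasis (yeI j)
            else 0)
          + (ℓ (B (yeI ⟨d - 1, by omega⟩))
              - (∑ m ∈ Finset.univ.filter (fun m : Fin d => 0 < (m : ℕ)), ℓ (B (zI m)))
                  / ℓ (B (zI ⟨0, by omega⟩)) * ℓ (B (yoI ⟨d - 1, by omega⟩)))
              • B.dualBasis (yeI ⟨d - 1, by omega⟩)) (B (Sum.inr (Sum.inl k))) = 0 := by
    intro k
    simp only [LinearMap.add_apply, LinearMap.sum_apply, LinearMap.smul_apply, smul_eq_mul,
      apply_dite (fun g : Module.Dual ℝ L => g (B (Sum.inr (Sum.inl k)))), LinearMap.zero_apply]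
    have e1 : (∑ i : Fin d, ℓ (B (zI i)) *
        (B.dualBasis (zI i)) (B (Sum.inr (Sum.inl k)))) = 0 := by
      refine Finset.sum_eq_zero fun i _ => ?_
      rw [Module.Basis.dualBasis_apply_self, if_neg (by simp [zI]), mul_zero]
    have e2 : (∑ j : Fin d, if hj : (j : ℕ) < d - 1 then
        (ℓ (B (yeI j)) - ℓ (B (zI ⟨(j : ℕ) + 1, by omega⟩)) / ℓ (B (zI ⟨0, by omega⟩))
          * ℓ (B (yoI j))) * (B.dualBasis (yeI j)) (B (Sum.inr (Sum.inl k))) else 0) = 0 := by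
      refine Finset.sum_eq_zero fun j _ => ?_
      split
      · rw [Module.Basis.dualBasis_apply_self, if_neg (by simp [yeI]), mul_zero]
      · rfl
    have e3 : (B.dualBasis (yeI ⟨d - 1, hd0'⟩)) (B (Sum.inr (Sum.inl k))) = 0 := by
      rw [Module.Basis.dualBasis_apply_self, if_neg (by simp [yeI])]
    rw [e1, e2, e3]
    ring
  have hPx : ∀ k : Fin d, ((∑ i : Fin d, ℓ (B (zI i)) • B.dualBasis (zI i))
          + (∑ j : Fin d, if hj : (j : ℕ) < d - 1 then
              (ℓ (B (yeI j))
                - ℓ (B (zI ⟨(j : ℕ) + 1, by omega⟩)) / ℓ (B (zI ⟨0, by omega⟩))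
                    * ℓ (B (yoI j))) • B.dualBasis (yeI j)
            else 0)
          + (ℓ (B (yeI ⟨d - 1, by omega⟩))
              - (∑ m ∈ Finset.univ.filter (fun m : Fin d => 0 < (m : ℕ)), ℓ (B (zI m)))
                  / ℓ (B (zI ⟨0, by omega⟩)) * ℓ (B (yoI ⟨d - 1, by omega⟩)))
              • B.dualBasis (yeI ⟨d - 1, by omega⟩)) (B (Sum.inr (Sum.inr (Sum.inr k)))) = 0 := by
    intro k
    simp only [LinearMap.add_apply, LinearMap.sum_apply, LinearMap.smul_apply, smul_eq_mul,
      apply_dite (fun g : Module.Dual ℝ L => g (B (Sum.inr (Sum.inr (Sum.inr k))))), LinearMap.zero_apply]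
    have e1 : (∑ i : Fin d, ℓ (B (zI i)) *
        (B.dualBasis (zI i)) (B (Sum.inr (Sum.inr (Sum.inr k))))) = 0 := by
      refine Finset.sum_eq_zero fun i _ => ?_
      rw [Module.Basis.dualBasis_apply_self, if_neg (by simp [zI]), mul_zero]
    have e2 : (∑ j : Fin d, if hj : (j : ℕ) < d - 1 then
        (ℓ (B (yeI j)) - ℓ (B (zI ⟨(j : ℕ) + 1, by omega⟩)) / ℓ (B (zI ⟨0, by omega⟩))
          * ℓ (B (yoI j))) * (B.dualBasis (yeI j)) (B (Sum.inr (Sum.inr (Sum.inr k)))) else 0)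
        = 0 := by
      refine Finset.sum_eq_zero fun j _ => ?_
      split
      · rw [Module.Basis.dualBasis_apply_self, if_neg (by simp [yeI]), mul_zero]
      · rfl
    have e3 : (B.dualBasis (yeI ⟨d - 1, hd0'⟩)) (B (Sum.inr (Sum.inr (Sum.inr k)))) = 0 := by
      rw [Module.Basis.dualBasis_apply_self, if_neg (by simp [yeI])]
    rw [e1, e2, e3]
    ring
  have hPye : ∀ k : Fin d, ((∑ i : Fin d, ℓ (B (zI i)) • B.dualBasis (zI i))
          + (∑ j : Fin d, if hj : (j : ℕ) < d - 1 then
              (ℓ (B (yeI j))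
                - ℓ (B (zI ⟨(j : ℕ) + 1, by omega⟩)) / ℓ (B (zI ⟨0, by omega⟩))
                    * ℓ (B (yoI j))) • B.dualBasis (yeI j)
            else 0)
          + (ℓ (B (yeI ⟨d - 1, by omega⟩))
              - (∑ m ∈ Finset.univ.filter (fun m : Fin d => 0 < (m : ℕ)), ℓ (B (zI m)))
                  / ℓ (B (zI ⟨0, by omega⟩)) * ℓ (B (yoI ⟨d - 1, by omega⟩)))
              • B.dualBasis (yeI ⟨d - 1, by omega⟩)) (B (Sum.inr (Sum.inr (Sum.inl k))))
      = ℓ (B (yeI k)) - wv k / ℓ (B (zI ⟨0, hd0⟩)) * ℓ (B (yoI k)) := by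
    intro k
    simp only [LinearMap.add_apply, LinearMap.sum_apply, LinearMap.smul_apply, smul_eq_mul,
      apply_dite (fun g : Module.Dual ℝ L => g (B (Sum.inr (Sum.inr (Sum.inl k))))), LinearMap.zero_apply]
    have e1 : (∑ i : Fin d, ℓ (B (zI i)) *
        (B.dualBasis (zI i)) (B (Sum.inr (Sum.inr (Sum.inl k))))) = 0 := by
      refine Finset.sum_eq_zero fun i _ => ?_
      rw [Module.Basis.dualBasis_apply_self, if_neg (by simp [zI]), mul_zero]
    by_cases hk : (k : ℕ) < d - 1
    · have e2 : (∑ j : Fin d, if hj : (j : ℕ) < d - 1 then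
          (ℓ (B (yeI j)) - ℓ (B (zI ⟨(j : ℕ) + 1, by omega⟩)) / ℓ (B (zI ⟨0, by omega⟩))
            * ℓ (B (yoI j))) * (B.dualBasis (yeI j)) (B (Sum.inr (Sum.inr (Sum.inl k))))
          else 0)
          = ℓ (B (yeI k)) - ℓ (B (zI ⟨(k : ℕ) + 1, by omega⟩)) / ℓ (B (zI ⟨0, by omega⟩))
              * ℓ (B (yoI k)) := by
        rw [Finset.sum_eq_single k]
        · rw [dif_pos hk, Module.Basis.dualBasis_apply_self, if_pos (show (Sum.inr (Sum.inr (Sum.inl k)) : Idx d) = yeI k from rfl), mul_one]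
        · intro j _ hj
          split
          · rw [Module.Basis.dualBasis_apply_self,
              if_neg (fun h => hj (Eq.symm (by simpa [yeI] using h))), mul_zero]
          · rfl
        · exact fun h => absurd (Finset.mem_univ _) h
      have e3 : (B.dualBasis (yeI ⟨d - 1, hd0'⟩)) (B (Sum.inr (Sum.inr (Sum.inl k)))) = 0 := by
        rw [Module.Basis.dualBasis_apply_self, if_neg (fun h => by
          simp only [yeI, Sum.inr.injEq, Sum.inl.injEq] at h
          have h2 := congrArg Fin.val h
          simp at h2
          omega)]
      rw [e1, e2, e3, hw k, dif_pos hk]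
      ring
    · have hk' : k = ⟨d - 1, by omega⟩ := by
        have := k.isLt
        exact Fin.ext (by simp; omega)
      have e2 : (∑ j : Fin d, if hj : (j : ℕ) < d - 1 then
          (ℓ (B (yeI j)) - ℓ (B (zI ⟨(j : ℕ) + 1, by omega⟩)) / ℓ (B (zI ⟨0, by omega⟩))
            * ℓ (B (yoI j))) * (B.dualBasis (yeI j)) (B (Sum.inr (Sum.inr (Sum.inl k))))
          else 0) = 0 := by
        refine Finset.sum_eq_zero fun j _ => ?_
        split
        · rename_i hj
          rw [Module.Basis.dualBasis_apply_self, if_neg (fun h => by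
            simp only [yeI, Sum.inr.injEq, Sum.inl.injEq] at h
            have h2 := congrArg Fin.val h
            omega), mul_zero]
        · rfl
      have e3 : (B.dualBasis (yeI ⟨d - 1, hd0'⟩)) (B (Sum.inr (Sum.inr (Sum.inl k)))) = 1 := by
        rw [Module.Basis.dualBasis_apply_self, if_pos (by rw [hk']; rfl)]
      rw [e1, e2, e3, hw k, dif_neg hk, hk']
      ring
  -- the implementing element X0
  set co : Idx d → ℝ := Sum.elim (fun _ => 0)
    (Sum.elim (fun j => -(ℓ (B (xI j)) / ℓ (B (zI ⟨0, hd0⟩))))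
      (Sum.elim (fun _ => 0) (fun j => ℓ (B (yoI j)) / ℓ (B (zI ⟨0, hd0⟩))))) with hco
  set X0 : L := ∑ a : Idx d, co a • B a with hX0def
  have hrepr : ∀ a : Idx d, B.repr X0 a = co a := by
    intro a
    rw [hX0def]
    exact congrFun (B.repr_sum_self co) a
  -- main argument
  ext g
  simp only [Set.mem_inter_iff, Set.mem_setOf_eq, SetLike.mem_coe, Set.mem_singleton_iff]
  constructor
  · rintro ⟨⟨X, rfl⟩, hsp⟩
    have hxj : ∀ j : Fin d, B.repr X (xI j) = ℓ (B (yoI j)) / ℓ (B (zI ⟨0, hd0⟩)) := by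
      intro j
      have h0 : (ℓ + coad X ℓ) (B (Sum.inr (Sum.inl j))) = 0 :=
        hvan (Sum.inr (Sum.inl j)) (fun i => by simp [zI]) (fun i => by simp [yeI]) _ hsp
      rw [LinearMap.add_apply, hcyo] at h0
      rw [eq_div_iff hz1]
      have h1 : ℓ (B (yoI j)) = B.repr X (xI j) * ℓ (B (zI ⟨0, hd0⟩)) := by
        have : ℓ (B (yoI j)) = ℓ (B (Sum.inr (Sum.inl j))) := rfl
        rw [this]; linarith
      linarith [h1]
    refine B.ext fun a => ?_
    rcases a with k | k | k | k
    · rw [hPz k, LinearMap.add_apply, hcz, add_zero]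
      rfl
    · rw [hPyo k]
      exact hvan (Sum.inr (Sum.inl k)) (fun i => by simp [zI]) (fun i => by simp [yeI]) _ hsp
    · rw [hPye k, LinearMap.add_apply, hcye, hxj]
      have : ℓ (B (Sum.inr (Sum.inr (Sum.inl k)))) = ℓ (B (yeI k)) := rfl
      rw [this]
      field_simp
      ring
    · rw [hPx k]
      exact hvan (Sum.inr (Sum.inr (Sum.inr k))) (fun i => by simp [zI]) (fun i => by simp [yeI])
        _ hsp
  · rintro rfl
    refine ⟨⟨X0, ?_⟩, ?_⟩
    · refine B.ext fun a => ?_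
      rcases a with k | k | k | k
      · rw [hPz k, LinearMap.add_apply, hcz, add_zero]
        rfl
      · rw [hPyo k, LinearMap.add_apply, hcyo, hrepr]
        have : ℓ (B (Sum.inr (Sum.inl k))) = ℓ (B (yoI k)) := rfl
        rw [this]
        simp only [hco, xI, Sum.elim_inr]
        field_simp
        ring
      · rw [hPye k, LinearMap.add_apply, hcye, hrepr]
        have : ℓ (B (Sum.inr (Sum.inr (Sum.inl k)))) = ℓ (B (yeI k)) := rfl
        rw [this]
        simp only [hco, xI, Sum.elim_inr]
        field_simp
        ring
      · rw [hPx k, LinearMap.add_apply, hcx, hrepr, hrepr]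
        have : ℓ (B (Sum.inr (Sum.inr (Sum.inr k)))) = ℓ (B (xI k)) := rfl
        rw [this]
        simp only [hco, xI, yoI, yeI, Sum.elim_inr, Sum.elim_inl]
        field_simp
        ring
    · refine Submodule.add_mem _ (Submodule.add_mem _ ?_ ?_) ?_
      · exact Submodule.sum_mem _ fun i _ => Submodule.smul_mem _ _
          (Submodule.subset_span (Set.mem_union_left _ ⟨i, rfl⟩))
      · refine Submodule.sum_mem _ fun j _ => ?_
        split
        · exact Submodule.smul_mem _ _
            (Submodule.subset_span (Set.mem_union_right _ ⟨j, rfl⟩))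
        · exact Submodule.zero_mem _
      · exact Submodule.smul_mem _ _
          (Submodule.subset_span (Set.mem_union_right _ ⟨_, rfl⟩))
end
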